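/- Let d ≥ 1, let L ∈ ℝ^{d×d} be lower triangular with L_{kk} > 0 for all k, and let μ ∈ ℝ^d. For u ∈ (0,1)^d define recursively, for k = 1, …, d: a_k(u) = (−μ_k − Σ_{j<k} L_{kj} z_j(u)) / L_{kk} and z_k(u) = Φ⁻¹(Φ(a_k(u)) + u_k·(1 − Φ(a_k(u)))), and set w(u) = ∏_{k=1}^d (1 − Φ(a_k(u))). Then for every measurable f : ℝ^d → [0, ∞): ∫_{(0,1)^d} f(z(u)) · w(u) du = ∫_{{z ∈ ℝ^d : Lz + μ ∈ O}} f(z) · ∏_{k=1}^d φ(z_k) dz. In particular, taking f ≡ 1, ∫_{(0,1)^d} w(u) du = ∫_{{z : Lz + μ ∈ O}} ∏_{k=1}^d φ(z_k) dz, the Gaussian orthant probability. -/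

import Mathlib

open MeasureTheory Matrix Real Set Filter Topology

/-- Standard normal CDF `Φ`. -/
noncomputable def stdNormalCDF (x : ℝ) : ℝ :=
  ∫ z in Set.Iic x, Real.exp (-z ^ 2 / 2) / Real.sqrt (2 * π)

/-- Inverse of the standard normal CDF (on `(0,1)`). -/
noncomputable def stdNormalCDFInv : ℝ → ℝ := Function.invFun stdNormalCDF

noncomputable def stdPdf (x : ℝ) : ℝ := Real.exp (-x ^ 2 / 2) / Real.sqrt (2 * π)

lemma stdPdf_pos (x : ℝ) : 0 < stdPdf x :=
  div_pos (Real.exp_pos _) (Real.sqrt_pos.mpr (by positivity))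

lemma continuous_stdPdf : Continuous stdPdf := by
  unfold stdPdf; fun_prop

lemma integrable_stdPdf : Integrable stdPdf := by
  have h : Integrable (fun x : ℝ => Real.exp (-(1/2) * x ^ 2)) :=
    integrable_exp_neg_mul_sq (by norm_num)
  have h2 := h.div_const (Real.sqrt (2 * π))
  refine h2.congr (Filter.Eventually.of_forall fun x => ?_)
  unfold stdPdf; ring_nf

lemma integral_stdPdf : ∫ x, stdPdf x = 1 := by
  have h : ∫ x : ℝ, Real.exp (-(1/2) * x ^ 2) = Real.sqrt (π / (1/2)) :=
    integral_gaussian (1/2)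
  have : ∫ x, stdPdf x = (∫ x : ℝ, Real.exp (-(1/2) * x ^ 2)) / Real.sqrt (2 * π) := by
    rw [← integral_div]
    congr 1; funext x; unfold stdPdf; ring_nf
  rw [this, h]
  rw [show π / (1/2) = 2 * π by ring]
  field_simp

lemma stdCDF_hasDerivAt (x : ℝ) : HasDerivAt stdNormalCDF (stdPdf x) x := by
  have key : ∀ y : ℝ, stdNormalCDF y = stdNormalCDF 0 + ∫ t in (0:ℝ)..y, stdPdf t := by
    intro y
    have := intervalIntegral.integral_Iic_sub_Iic (μ := volume) (f := stdPdf)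
      (integrable_stdPdf.integrableOn) (integrable_stdPdf.integrableOn) (a := 0) (b := y)
    unfold stdNormalCDF; unfold stdPdf at this ⊢
    linarith [this]
  have h : HasDerivAt (fun y => stdNormalCDF 0 + ∫ t in (0:ℝ)..y, stdPdf t) (stdPdf x) x := by
    have := (intervalIntegral.integral_hasDerivAt_right
      (integrable_stdPdf.intervalIntegrable (a := 0) (b := x))
      (continuous_stdPdf.stronglyMeasurable.stronglyMeasurableAtFilter)
      continuous_stdPdf.continuousAt)
    exact this.const_add _
  exact h.congr_of_eventuallyEq (Filter.Eventually.of_forall key)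

lemma continuous_stdCDF : Continuous stdNormalCDF := by
  have : Differentiable ℝ stdNormalCDF := fun x => (stdCDF_hasDerivAt x).differentiableAt
  exact this.continuous

lemma stdCDF_strictMono : StrictMono stdNormalCDF := by
  intro x y hxy
  have key := intervalIntegral.integral_Iic_sub_Iic (μ := volume) (f := stdPdf)
    (integrable_stdPdf.integrableOn) (integrable_stdPdf.integrableOn) (a := x) (b := y)
  have hpos : 0 < ∫ t in x..y, stdPdf t :=
    intervalIntegral.intervalIntegral_pos_of_pos (integrable_stdPdf.intervalIntegrable) stdPdf_pos hxy
  have : stdNormalCDF y - stdNormalCDF x = ∫ t in x..y, stdPdf t := key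
  linarith

lemma stdCDF_pos (x : ℝ) : 0 < stdNormalCDF x := by
  rw [show stdNormalCDF x = ∫ t in Iic x, stdPdf t from rfl,
    setIntegral_pos_iff_support_of_nonneg_ae
      (Filter.Eventually.of_forall fun t => (stdPdf_pos t).le)
      integrable_stdPdf.integrableOn]
  have : Function.support stdPdf = univ := by
    ext t; simp [Function.mem_support, (stdPdf_pos t).ne']
  rw [this, Set.univ_inter]
  simp [Real.volume_Iic]

lemma stdCDF_add_Ioi (x : ℝ) : stdNormalCDF x + ∫ t in Ioi x, stdPdf t = 1 := by
  have := intervalIntegral.integral_Iic_add_Ioi (μ := volume) (f := stdPdf) (b := x)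
    integrable_stdPdf.integrableOn integrable_stdPdf.integrableOn
  rw [show stdNormalCDF x = ∫ t in Iic x, stdPdf t from rfl, this, integral_stdPdf]

lemma stdCDF_lt_one (x : ℝ) : stdNormalCDF x < 1 := by
  have h := stdCDF_add_Ioi x
  have hpos : 0 < ∫ t in Ioi x, stdPdf t := by
    rw [setIntegral_pos_iff_support_of_nonneg_ae
      (Filter.Eventually.of_forall fun t => (stdPdf_pos t).le)
      integrable_stdPdf.integrableOn]
    have : Function.support stdPdf = univ := by
      ext t; simp [Function.mem_support, (stdPdf_pos t).ne']
    rw [this, Set.univ_inter]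
    simp [Real.volume_Ioi]
  linarith

lemma stdCDF_mem_Ioo (x : ℝ) : stdNormalCDF x ∈ Ioo (0:ℝ) 1 := ⟨stdCDF_pos x, stdCDF_lt_one x⟩

lemma stdCDF_tendsto_atTop : Tendsto stdNormalCDF atTop (𝓝 1) := by
  have hc : AECover (volume : Measure ℝ) atTop (fun x : ℝ => Iic x) :=
    aecover_Iic tendsto_id
  have := hc.integral_tendsto_of_countably_generated integrable_stdPdf
  rwa [integral_stdPdf] at this

lemma stdCDF_tendsto_atBot : Tendsto stdNormalCDF atBot (𝓝 0) := by
  have hc : AECover (volume : Measure ℝ) atBot (fun x : ℝ => Ioi x) :=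
    aecover_Ioi tendsto_id
  have h := hc.integral_tendsto_of_countably_generated integrable_stdPdf
  rw [integral_stdPdf] at h
  have : stdNormalCDF = fun x => 1 - ∫ t in Ioi x, stdPdf t := by
    funext x; have := stdCDF_add_Ioi x; linarith
  rw [this]
  have := h.const_sub 1
  simpa using this

lemma stdCDF_surj {y : ℝ} (hy : y ∈ Ioo (0:ℝ) 1) : ∃ x, stdNormalCDF x = y := by
  obtain ⟨a, ha⟩ : ∃ a, stdNormalCDF a < y := by
    have := stdCDF_tendsto_atBot.eventually_lt_const hy.1
    exact this.exists
  obtain ⟨b, hb⟩ : ∃ b, y < stdNormalCDF b := by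
    have := stdCDF_tendsto_atTop.eventually_const_lt hy.2
    exact this.exists
  obtain ⟨x, _, hx⟩ := intermediate_value_Icc (le_of_lt (lt_of_not_ge fun h => by
      exact absurd (stdCDF_strictMono.le_iff_le.mpr h) (not_le.mpr (lt_trans ha hb)) ))
    continuous_stdCDF.continuousOn (mem_Icc.mpr ⟨ha.le, hb.le⟩)
  exact ⟨x, hx⟩

lemma stdCDFInv_CDF (x : ℝ) : stdNormalCDFInv (stdNormalCDF x) = x :=
  Function.leftInverse_invFun stdCDF_strictMono.injective x

lemma stdCDF_CDFInv {y : ℝ} (hy : y ∈ Ioo (0:ℝ) 1) : stdNormalCDF (stdNormalCDFInv y) = y :=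
  Function.invFun_eq (stdCDF_surj hy)

lemma stdCDFInv_mem_Ioo_lt {y y' : ℝ} (hy : y ∈ Ioo (0:ℝ) 1) (hy' : y' ∈ Ioo (0:ℝ) 1)
    (h : y < y') : stdNormalCDFInv y < stdNormalCDFInv y' := by
  by_contra hle
  have := stdCDF_strictMono.le_iff_le.mpr (not_lt.mp hle)
  rw [stdCDF_CDFInv hy, stdCDF_CDFInv hy'] at this
  exact absurd this (not_le.mpr h)

lemma stdCDFInv_continuousAt {y : ℝ} (hy : y ∈ Ioo (0:ℝ) 1) :
    ContinuousAt stdNormalCDFInv y := by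
  rw [Metric.continuousAt_iff]
  intro ε hε
  set x := stdNormalCDFInv y with hx
  have hyx : stdNormalCDF x = y := stdCDF_CDFInv hy
  have h1 : stdNormalCDF (x - ε/2) < y := by
    rw [← hyx]; exact stdCDF_strictMono (by linarith)
  have h2 : y < stdNormalCDF (x + ε/2) := by
    rw [← hyx]; exact stdCDF_strictMono (by linarith)
  refine ⟨min (y - stdNormalCDF (x - ε/2)) (stdNormalCDF (x + ε/2) - y),
    lt_min (by linarith) (by linarith), fun {y'} hd => ?_⟩
  rw [Real.dist_eq] at hd
  have hby : stdNormalCDF (x - ε/2) < y' ∧ y' < stdNormalCDF (x + ε/2) := by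
    have ha := hd.trans_le (min_le_left _ _)
    have hb := hd.trans_le (min_le_right _ _)
    rw [abs_lt] at ha hb
    exact ⟨by linarith [ha.1], by linarith [hb.2]⟩
  have hy'm : y' ∈ Ioo (0:ℝ) 1 :=
    ⟨(stdCDF_pos _).trans hby.1, hby.2.trans (stdCDF_lt_one _)⟩
  have e1 : x - ε/2 < stdNormalCDFInv y' := by
    have := stdCDFInv_mem_Ioo_lt (stdCDF_mem_Ioo _) hy'm hby.1
    rwa [stdCDFInv_CDF] at this
  have e2 : stdNormalCDFInv y' < x + ε/2 := by
    have := stdCDFInv_mem_Ioo_lt hy'm (stdCDF_mem_Ioo _) hby.2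
    rwa [stdCDFInv_CDF] at this
  rw [Real.dist_eq, abs_lt]
  constructor <;> linarith

lemma stdCDFInv_hasDerivAt {y : ℝ} (hy : y ∈ Ioo (0:ℝ) 1) :
    HasDerivAt stdNormalCDFInv (stdPdf (stdNormalCDFInv y))⁻¹ y := by
  refine HasDerivAt.of_local_left_inverse (stdCDFInv_continuousAt hy)
    (stdCDF_hasDerivAt _) (stdPdf_pos _).ne' ?_
  have hopen : Ioo (0:ℝ) 1 ∈ 𝓝 y := isOpen_Ioo.mem_nhds hy
  filter_upwards [hopen] with y' hy' using stdCDF_CDFInv hy'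

/-- The SOV recursion: `z_k = Φ⁻¹(Φ(a_k) + u_k (1 - Φ(a_k)))` where
`a_k = (-μ_k - ∑_{j<k} L_{kj} z_j) / L_{kk}`. -/
noncomputable def sovZ (d : ℕ) (L : Matrix (Fin d) (Fin d) ℝ) (μ u : Fin d → ℝ) :
    ℕ → ℝ := fun k =>
  Nat.strongRecOn k (fun k ih =>
    if h : k < d then
      let kk : Fin d := ⟨k, h⟩
      let a : ℝ := (-(μ kk) - ∑ j : Fin k, L kk ⟨j.1, j.2.trans h⟩ * ih j.1 j.2) / L kk kk
      stdNormalCDFInv (stdNormalCDF a + u kk * (1 - stdNormalCDF a))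
    else 0)

/-- The SOV truncation bounds `a_k = (-μ_k - ∑_{j<k} L_{kj} z_j) / L_{kk}`. -/
noncomputable def sovA (d : ℕ) (L : Matrix (Fin d) (Fin d) ℝ) (μ u : Fin d → ℝ)
    (k : Fin d) : ℝ :=
  (-(μ k) - ∑ j : Fin k.1, L k ⟨j.1, j.2.trans k.2⟩ * sovZ d L μ u j.1) / L k k

lemma sovZ_eq (d : ℕ) (L : Matrix (Fin d) (Fin d) ℝ) (μ u : Fin d → ℝ) {k : ℕ} (h : k < d) :
    sovZ d L μ u k = stdNormalCDFInv (stdNormalCDF (sovA d L μ u ⟨k, h⟩) +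
      u ⟨k, h⟩ * (1 - stdNormalCDF (sovA d L μ u ⟨k, h⟩))) := by
  simp only [sovZ]
  rw [Nat.strongRecOn_eq, dif_pos h]
  rfl

lemma sovZ_of_ge (d : ℕ) (L : Matrix (Fin d) (Fin d) ℝ) (μ u : Fin d → ℝ) {k : ℕ} (h : ¬ k < d) :
    sovZ d L μ u k = 0 := by
  simp only [sovZ]
  rw [Nat.strongRecOn_eq, dif_neg h]

section SOV
variable {d : ℕ} {L : Matrix (Fin d) (Fin d) ℝ} {μ : Fin d → ℝ}

lemma sovZ_congr {u v : Fin d → ℝ} : ∀ k : ℕ, (∀ j : Fin d, j.1 ≤ k → u j = v j) →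
    sovZ d L μ u k = sovZ d L μ v k := by
  intro k
  induction k using Nat.strong_induction_on with
  | _ k ih =>
    intro hagree
    by_cases h : k < d
    · have hA : sovA d L μ u ⟨k, h⟩ = sovA d L μ v ⟨k, h⟩ := by
        unfold sovA
        congr 2
        apply Finset.sum_congr rfl
        intro j _
        rw [ih j.1 j.2 (fun i hi => hagree i (le_of_lt (lt_of_le_of_lt hi j.2)))]
      rw [sovZ_eq d L μ u h, sovZ_eq d L μ v h, hA, hagree ⟨k, h⟩ le_rfl]
    · rw [sovZ_of_ge d L μ u h, sovZ_of_ge d L μ v h]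

lemma sovA_congr {u v : Fin d → ℝ} (k : Fin d) (h : ∀ j : Fin d, j.1 < k.1 → u j = v j) :
    sovA d L μ u k = sovA d L μ v k := by
  unfold sovA
  congr 2
  apply Finset.sum_congr rfl
  intro j _
  rw [sovZ_congr j.1 (fun i hi => h i (lt_of_le_of_lt hi j.2))]

variable {u : Fin d → ℝ}

lemma sovY_mem (hu : ∀ i, u i ∈ Ioo (0:ℝ) 1) (k : Fin d) :
    stdNormalCDF (sovA d L μ u k) + u k * (1 - stdNormalCDF (sovA d L μ u k)) ∈
      Ioo (stdNormalCDF (sovA d L μ u k)) 1 := by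
  have hc := stdCDF_mem_Ioo (sovA d L μ u k)
  have ht := hu k
  constructor
  · nlinarith [ht.1, hc.2]
  · nlinarith [ht.2, hc.2]

lemma sovY_mem01 (hu : ∀ i, u i ∈ Ioo (0:ℝ) 1) (k : Fin d) :
    stdNormalCDF (sovA d L μ u k) + u k * (1 - stdNormalCDF (sovA d L μ u k)) ∈
      Ioo (0:ℝ) 1 :=
  ⟨(stdCDF_pos _).trans (sovY_mem hu k).1, (sovY_mem hu k).2⟩

lemma stdCDF_sovZ (hu : ∀ i, u i ∈ Ioo (0:ℝ) 1) (k : Fin d) :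
    stdNormalCDF (sovZ d L μ u k.1) =
      stdNormalCDF (sovA d L μ u k) + u k * (1 - stdNormalCDF (sovA d L μ u k)) := by
  rw [show sovZ d L μ u k.1 = _ from sovZ_eq d L μ u k.2]
  exact stdCDF_CDFInv (by simpa using sovY_mem01 hu k)

lemma sovA_lt_sovZ (hu : ∀ i, u i ∈ Ioo (0:ℝ) 1) (k : Fin d) :
    sovA d L μ u k < sovZ d L μ u k.1 := by
  have h1 := stdCDF_sovZ (L := L) (μ := μ) hu k
  have h2 := (sovY_mem (L := L) (μ := μ) hu k).1
  by_contra hle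
  have := stdCDF_strictMono.le_iff_le.mpr (not_lt.mp hle)
  rw [h1] at this
  linarith

end SOV

section Deriv
variable {d : ℕ} {L : Matrix (Fin d) (Fin d) ℝ} {μ : Fin d → ℝ}

lemma differentiable_stdCDF : Differentiable ℝ stdNormalCDF :=
  fun x => (stdCDF_hasDerivAt x).differentiableAt

lemma sovZ_differentiableAt :
    ∀ k : ℕ, k < d → ∀ u : Fin d → ℝ, (∀ i, u i ∈ Ioo (0:ℝ) 1) →
      DifferentiableAt ℝ (fun v => sovZ d L μ v k) u := by
  intro k
  induction k using Nat.strong_induction_on with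
  | _ k ih =>
    intro h u hu
    have hA : DifferentiableAt ℝ (fun v => sovA d L μ v ⟨k, h⟩) u := by
      unfold sovA
      have hsum : DifferentiableAt ℝ (fun v : Fin d → ℝ =>
          -(μ ⟨k, h⟩) - ∑ j : Fin k, L ⟨k, h⟩ ⟨j.1, j.2.trans h⟩ * sovZ d L μ v j.1) u := by
        refine DifferentiableAt.sub (differentiableAt_const _) ?_
        refine DifferentiableAt.fun_sum fun j _ => ?_
        exact (ih j.1 j.2 (j.2.trans h) u hu).const_mul _
      simp only [div_eq_mul_inv]
      exact hsum.mul_const _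
    have hY : DifferentiableAt ℝ (fun v =>
        stdNormalCDF (sovA d L μ v ⟨k, h⟩) +
          v ⟨k, h⟩ * (1 - stdNormalCDF (sovA d L μ v ⟨k, h⟩))) u := by
      have hΦA : DifferentiableAt ℝ (fun v => stdNormalCDF (sovA d L μ v ⟨k, h⟩)) u :=
        (differentiable_stdCDF _).comp u hA
      exact hΦA.add (((ContinuousLinearMap.proj (R := ℝ) (φ := fun _ : Fin d => ℝ)
        ⟨k, h⟩).differentiableAt).mul ((differentiableAt_const _).sub hΦA))
    have heq : (fun v => sovZ d L μ v k) = fun v =>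
        stdNormalCDFInv (stdNormalCDF (sovA d L μ v ⟨k, h⟩) +
          v ⟨k, h⟩ * (1 - stdNormalCDF (sovA d L μ v ⟨k, h⟩))) :=
      funext fun v => sovZ_eq d L μ v h
    rw [heq]
    exact ((stdCDFInv_hasDerivAt (sovY_mem01 (L := L) (μ := μ) hu
      ⟨k, h⟩)).differentiableAt).comp u hY

lemma hasDerivAt_comp_update {F : (Fin d → ℝ) → ℝ} {D : (Fin d → ℝ) →L[ℝ] ℝ}
    {u : Fin d → ℝ} (hF : HasFDerivAt F D u) (j : Fin d) :
    HasDerivAt (fun t => F (Function.update u j t)) (D (Pi.single j 1)) (u j) := by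
  have hu : Function.update u j (u j) = u := Function.update_eq_self _ _
  have hF' : HasFDerivAt F D (Function.update u j (u j)) := hu.symm ▸ hF
  exact hF'.comp_hasDerivAt (u j) (hasDerivAt_update u j (u j))

lemma partial_zero {F : (Fin d → ℝ) → ℝ} {D : (Fin d → ℝ) →L[ℝ] ℝ} {u : Fin d → ℝ}
    (hF : HasFDerivAt F D u) {j : Fin d}
    (hconst : ∀ t, F (Function.update u j t) = F u) : D (Pi.single j 1) = 0 := by
  have h1 := hasDerivAt_comp_update hF j
  have h2 : HasDerivAt (fun t : ℝ => F (Function.update u j t)) 0 (u j) := by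
    have : (fun t : ℝ => F (Function.update u j t)) = fun _ => F u := funext hconst
    rw [this]; exact hasDerivAt_const _ _
  exact h1.unique h2

end Deriv

section Partials
variable {d : ℕ} {L : Matrix (Fin d) (Fin d) ℝ} {μ : Fin d → ℝ}

lemma sovZ_update_gt (u : Fin d → ℝ) {k : ℕ} {j : Fin d} (hjk : k < j.1) (t : ℝ) :
    sovZ d L μ (Function.update u j t) k = sovZ d L μ u k := by
  refine sovZ_congr k fun i hi => Function.update_of_ne ?_ _ _
  intro he
  exact absurd (he ▸ hi : (j:ℕ) ≤ k) (not_le.mpr hjk)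

lemma partial_gt {u : Fin d → ℝ} (hu : ∀ i, u i ∈ Ioo (0:ℝ) 1) {k : ℕ} (hk : k < d)
    {j : Fin d} (hjk : k < j.1) :
    (fderiv ℝ (fun v => sovZ d L μ v k) u) (Pi.single j 1) = 0 :=
  partial_zero (sovZ_differentiableAt k hk u hu).hasFDerivAt
    (fun t => sovZ_update_gt u hjk t)

lemma partial_diag {u : Fin d → ℝ} (hu : ∀ i, u i ∈ Ioo (0:ℝ) 1) {k : ℕ} (hk : k < d) :
    (fderiv ℝ (fun v => sovZ d L μ v k) u) (Pi.single ⟨k, hk⟩ 1) =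
      (1 - stdNormalCDF (sovA d L μ u ⟨k, hk⟩)) / stdPdf (sovZ d L μ u k) := by
  set kk : Fin d := ⟨k, hk⟩ with hkk
  set c := stdNormalCDF (sovA d L μ u kk) with hc
  have h1 := hasDerivAt_comp_update (sovZ_differentiableAt (L := L) (μ := μ) k hk u hu).hasFDerivAt kk
  have heq : (fun t => sovZ d L μ (Function.update u kk t) k) =
      fun t => stdNormalCDFInv (c + t * (1 - c)) := by
    funext t
    rw [sovZ_eq d L μ _ hk]
    have hA : sovA d L μ (Function.update u kk t) ⟨k, hk⟩ = sovA d L μ u ⟨k, hk⟩ := by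
      refine sovA_congr _ fun i hi => Function.update_of_ne ?_ _ _
      intro he
      exact absurd (he ▸ hi : (kk:ℕ) < k) (lt_irrefl k)
    rw [show (⟨k, hk⟩ : Fin d) = kk from rfl] at hA ⊢
    rw [hA, Function.update_self, ← hc]
  rw [heq] at h1
  have hy : c + u kk * (1 - c) ∈ Ioo (0:ℝ) 1 := sovY_mem01 hu kk
  have h2 : HasDerivAt (fun t => stdNormalCDFInv (c + t * (1 - c)))
      ((stdPdf (stdNormalCDFInv (c + u kk * (1 - c))))⁻¹ * (1 - c)) (u kk) := by
    have hin : HasDerivAt (fun t : ℝ => c + t * (1 - c)) (1 - c) (u kk) := by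
      simpa using ((hasDerivAt_id (u kk)).mul_const (1 - c)).const_add c
    exact (stdCDFInv_hasDerivAt hy).comp (u kk) hin
  have hz : stdNormalCDFInv (c + u kk * (1 - c)) = sovZ d L μ u k := by
    rw [sovZ_eq d L μ u hk]
  rw [h1.unique h2, hz, inv_mul_eq_div]

end Partials

section Main
variable {d : ℕ} {L : Matrix (Fin d) (Fin d) ℝ} {μ : Fin d → ℝ}

lemma sum_fin_cast (i : Fin d) (F : Fin d → ℝ) :
    ∑ j ∈ Finset.Iio i, F j = ∑ j : Fin i.1, F ⟨j.1, j.2.trans i.2⟩ := by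
  refine Finset.sum_bij' (fun (j : Fin d) (hj : j ∈ Finset.Iio i) =>
      (⟨j.1, Fin.lt_def.mp (Finset.mem_Iio.mp hj)⟩ : Fin i.1))
    (fun (j : Fin i.1) _ => (⟨j.1, j.2.trans i.2⟩ : Fin d)) ?_ ?_ ?_ ?_ ?_
  · intro a ha; exact Finset.mem_univ _
  · intro a ha; exact Finset.mem_Iio.mpr (Fin.lt_def.mpr a.2)
  · intro a ha; rfl
  · intro a ha; rfl
  · intro a ha; rfl

lemma mulVec_split (hLtri : ∀ k j : Fin d, k < j → L k j = 0) (z : Fin d → ℝ) (i : Fin d) :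
    (L *ᵥ z) i =
      (∑ j : Fin i.1, L i ⟨j.1, j.2.trans i.2⟩ * z ⟨j.1, j.2.trans i.2⟩) + L i i * z i := by
  have h0 : (L *ᵥ z) i = ∑ j : Fin d, L i j * z j := by
    simp [mulVec, dotProduct]
  rw [h0]
  have h1 : ∑ j : Fin d, L i j * z j = ∑ j ∈ Finset.Iic i, L i j * z j := by
    symm
    apply Finset.sum_subset (Finset.subset_univ _)
    intro j _ hj
    rw [hLtri i j (by simpa [Finset.mem_Iic] using hj), zero_mul]
  rw [h1, ← Finset.Iio_insert, Finset.sum_insert (by simp), add_comm]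
  congr 1
  exact sum_fin_cast i fun j => L i j * z j

lemma pos_iff_lt (hLdiag : ∀ k : Fin d, 0 < L k k)
    (hLtri : ∀ k j : Fin d, k < j → L k j = 0) (z : Fin d → ℝ) (i : Fin d) :
    0 < (L *ᵥ z + μ) i ↔
      (-(μ i) - ∑ j : Fin i.1, L i ⟨j.1, j.2.trans i.2⟩ * z ⟨j.1, j.2.trans i.2⟩) / L i i
        < z i := by
  rw [Pi.add_apply, mulVec_split hLtri, div_lt_iff₀ (hLdiag i)]
  constructor <;> intro <;> nlinarith [hLdiag i]

lemma sovG_mem_T (hLdiag : ∀ k : Fin d, 0 < L k k)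
    (hLtri : ∀ k j : Fin d, k < j → L k j = 0) {u : Fin d → ℝ}
    (hu : ∀ i, u i ∈ Ioo (0:ℝ) 1) (i : Fin d) :
    0 < (L *ᵥ (fun k : Fin d => sovZ d L μ u k.1) + μ) i := by
  rw [pos_iff_lt hLdiag hLtri]
  exact sovA_lt_sovZ (L := L) (μ := μ) hu i

lemma sovG_surj (hLdiag : ∀ k : Fin d, 0 < L k k)
    (hLtri : ∀ k j : Fin d, k < j → L k j = 0) {z : Fin d → ℝ}
    (hz : ∀ i, 0 < (L *ᵥ z + μ) i) :
    ∃ u : Fin d → ℝ, (∀ i, u i ∈ Ioo (0:ℝ) 1) ∧ (fun k : Fin d => sovZ d L μ u k.1) = z := by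
  set aT : Fin d → ℝ := fun i =>
    (-(μ i) - ∑ j : Fin i.1, L i ⟨j.1, j.2.trans i.2⟩ * z ⟨j.1, j.2.trans i.2⟩) / L i i
    with haT
  have hlt : ∀ i, aT i < z i := fun i => (pos_iff_lt hLdiag hLtri z i).mp (hz i)
  set u : Fin d → ℝ := fun i =>
    (stdNormalCDF (z i) - stdNormalCDF (aT i)) / (1 - stdNormalCDF (aT i)) with hud
  have hcd : ∀ i, stdNormalCDF (aT i) < stdNormalCDF (z i) :=
    fun i => stdCDF_strictMono (hlt i)
  have hden : ∀ i, 0 < 1 - stdNormalCDF (aT i) := fun i => by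
    have := stdCDF_lt_one (aT i); linarith
  have humem : ∀ i, u i ∈ Ioo (0:ℝ) 1 := by
    intro i
    constructor
    · exact div_pos (by linarith [hcd i]) (hden i)
    · rw [div_lt_one (hden i)]
      have := stdCDF_lt_one (z i); linarith
  have hzz : ∀ k : ℕ, ∀ h : k < d, sovZ d L μ u k = z ⟨k, h⟩ := by
    intro k
    induction k using Nat.strong_induction_on with
    | _ k ih =>
      intro h
      have hA : sovA d L μ u ⟨k, h⟩ = aT ⟨k, h⟩ := by
        rw [haT]; unfold sovA
        congr 2
        refine Finset.sum_congr rfl fun j _ => ?_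
        rw [ih j.1 j.2 (j.2.trans h)]
      rw [sovZ_eq d L μ u h, hA]
      have harg : stdNormalCDF (aT ⟨k, h⟩) + u ⟨k, h⟩ * (1 - stdNormalCDF (aT ⟨k, h⟩)) =
          stdNormalCDF (z ⟨k, h⟩) := by
        rw [hud]
        have hne : 1 - stdNormalCDF (aT ⟨k, h⟩) ≠ 0 := (hden ⟨k, h⟩).ne'
        rw [div_mul_eq_mul_div, mul_div_assoc, div_self hne, mul_one]
        ring
      rw [harg, stdCDFInv_CDF]
  exact ⟨u, humem, funext fun k => hzz k.1 k.2⟩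

lemma sovG_injOn :
    InjOn (fun (v : Fin d → ℝ) (k : Fin d) => sovZ d L μ v k.1)
      {u : Fin d → ℝ | ∀ i, u i ∈ Ioo (0:ℝ) 1} := by
  intro u hu v hv h
  have hzz : ∀ m : ℕ, m < d → sovZ d L μ u m = sovZ d L μ v m := fun m hm =>
    congrFun h ⟨m, hm⟩
  funext i
  have hA : sovA d L μ u i = sovA d L μ v i := by
    unfold sovA
    congr 2
    exact Finset.sum_congr rfl fun j _ => by rw [hzz j.1 (j.2.trans i.2)]
  have h1 := stdCDF_sovZ (L := L) (μ := μ) hu i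
  have h2 := stdCDF_sovZ (L := L) (μ := μ) hv i
  rw [hzz i.1 i.2, hA] at h1
  have hden : 1 - stdNormalCDF (sovA d L μ v i) ≠ 0 := by
    have := stdCDF_lt_one (sovA d L μ v i); intro hc; linarith
  have := h1.symm.trans h2
  have hmul : u i * (1 - stdNormalCDF (sovA d L μ v i)) =
      v i * (1 - stdNormalCDF (sovA d L μ v i)) := by linarith
  exact mul_right_cancel₀ hden hmul

end Main

section Det
variable {d : ℕ} {L : Matrix (Fin d) (Fin d) ℝ} {μ : Fin d → ℝ}

lemma det_fderiv_sovG {u : Fin d → ℝ} (hu : ∀ i, u i ∈ Ioo (0:ℝ) 1) :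
    (fderiv ℝ (fun (v : Fin d → ℝ) (k : Fin d) => sovZ d L μ v k.1) u).det =
      ∏ k : Fin d, (1 - stdNormalCDF (sovA d L μ u k)) / stdPdf (sovZ d L μ u k.1) := by
  have hdiff : ∀ k : Fin d, DifferentiableAt ℝ (fun v => sovZ d L μ v k.1) u := fun k =>
    sovZ_differentiableAt k.1 k.2 u hu
  have hg : fderiv ℝ (fun (v : Fin d → ℝ) (k : Fin d) => sovZ d L μ v k.1) u =
      ContinuousLinearMap.pi fun k => fderiv ℝ (fun v => sovZ d L μ v k.1) u :=
    fderiv_pi hdiff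
  rw [hg, ContinuousLinearMap.det, ← LinearMap.det_toMatrix'
    ((ContinuousLinearMap.pi fun k : Fin d =>
        fderiv ℝ (fun v => sovZ d L μ v k.1) u : (Fin d → ℝ) →L[ℝ] Fin d → ℝ) :
      (Fin d → ℝ) →ₗ[ℝ] Fin d → ℝ)]
  set M := LinearMap.toMatrix'
    ((ContinuousLinearMap.pi fun k : Fin d =>
        fderiv ℝ (fun v => sovZ d L μ v k.1) u : (Fin d → ℝ) →L[ℝ] Fin d → ℝ) :
      (Fin d → ℝ) →ₗ[ℝ] Fin d → ℝ) with hMdef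
  have hM : ∀ k j : Fin d, M k j =
      (fderiv ℝ (fun v => sovZ d L μ v k.1) u) (Pi.single j 1) := by
    intro k j
    rw [hMdef, LinearMap.toMatrix'_apply]
    have : (fun j' : Fin d => if j' = j then (1:ℝ) else 0) = Pi.single j 1 := by
      funext j'
      rw [Pi.single_apply]
    rfl
  have htri : M.BlockTriangular OrderDual.toDual := by
    intro i j hij
    rw [hM]
    exact partial_gt (L := L) (μ := μ) hu i.2 (hij : i < j)
  rw [Matrix.det_of_lowerTriangular M htri]
  refine Finset.prod_congr rfl fun k _ => ?_
  rw [hM]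
  have := partial_diag (L := L) (μ := μ) hu k.2
  simpa using this

end Det

theorem stmt16 (d : ℕ) (hd : 1 ≤ d)
    (L : Matrix (Fin d) (Fin d) ℝ)
    (hLtri : ∀ k j : Fin d, k < j → L k j = 0)
    (hLdiag : ∀ k : Fin d, 0 < L k k)
    (μ : Fin d → ℝ)
    (f : (Fin d → ℝ) → ℝ) (hf : Measurable f) (hf0 : ∀ z, 0 ≤ f z) :
    ∫ u in {u : Fin d → ℝ | ∀ i, u i ∈ Set.Ioo (0 : ℝ) 1},
        f (fun k => sovZ d L μ u k.1) *
          ∏ k : Fin d, (1 - stdNormalCDF (sovA d L μ u k)) =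
      ∫ z in {z : Fin d → ℝ | ∀ i, 0 < (L *ᵥ z + μ) i},
        f z * ∏ k : Fin d, Real.exp (-(z k) ^ 2 / 2) / Real.sqrt (2 * π) := by
  set s : Set (Fin d → ℝ) := {u : Fin d → ℝ | ∀ i, u i ∈ Set.Ioo (0:ℝ) 1} with hsdef
  set g : (Fin d → ℝ) → (Fin d → ℝ) := fun v k => sovZ d L μ v k.1 with hgdef
  have hs_eq : s = Set.pi Set.univ (fun _ : Fin d => Ioo (0:ℝ) 1) := by
    ext u; simp [hsdef, Set.mem_pi]
  have hsm : MeasurableSet s := by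
    rw [hs_eq]; exact MeasurableSet.univ_pi fun i => measurableSet_Ioo
  have hT : {z : Fin d → ℝ | ∀ i, 0 < (L *ᵥ z + μ) i} = g '' s := by
    ext z
    constructor
    · intro hz
      obtain ⟨u, hu, he⟩ := sovG_surj hLdiag hLtri hz
      exact ⟨u, hu, he⟩
    · rintro ⟨u, hu, rfl⟩
      intro i
      exact sovG_mem_T hLdiag hLtri hu i
  have hder : ∀ u ∈ s, HasFDerivWithinAt g (fderiv ℝ g u) s u := by
    intro u hu
    have hdka : DifferentiableAt ℝ g u := by
      rw [hgdef, differentiableAt_pi]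
      exact fun k => sovZ_differentiableAt k.1 k.2 u hu
    exact hdka.hasFDerivAt.hasFDerivWithinAt
  have key := integral_image_eq_integral_abs_det_fderiv_smul (μ := volume) hsm hder
      sovG_injOn
      (fun z => f z * ∏ k : Fin d, Real.exp (-(z k) ^ 2 / 2) / Real.sqrt (2 * π))
  rw [hT, key]
  apply setIntegral_congr_fun hsm
  intro u hu
  have hdet := det_fderiv_sovG (L := L) (μ := μ) hu
  have hPpos : 0 < ∏ k : Fin d, (1 - stdNormalCDF (sovA d L μ u k)) / stdPdf (sovZ d L μ u k.1) := by
    refine Finset.prod_pos fun k _ => div_pos ?_ (stdPdf_pos _)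
    have := stdCDF_lt_one (sovA d L μ u k); linarith
  have habs : |(fderiv ℝ g u).det| =
      ∏ k : Fin d, (1 - stdNormalCDF (sovA d L μ u k)) / stdPdf (sovZ d L μ u k.1) := by
    rw [hgdef] at *
    rw [hdet, abs_of_pos hPpos]
  have hprod : ∏ k : Fin d, Real.exp (-(g u k) ^ 2 / 2) / Real.sqrt (2 * π) =
      ∏ k : Fin d, stdPdf (sovZ d L μ u k.1) := rfl
  show f (fun k => sovZ d L μ u k.1) * ∏ k : Fin d, (1 - stdNormalCDF (sovA d L μ u k)) =
    |(fderiv ℝ g u).det| • (f (g u) * ∏ k : Fin d, Real.exp (-(g u k) ^ 2 / 2) / Real.sqrt (2 * π))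
  rw [habs, hprod, smul_eq_mul]
  have hfg : f (g u) = f (fun k => sovZ d L μ u k.1) := rfl
  rw [hfg]
  rw [mul_comm ((∏ k : Fin d, (1 - stdNormalCDF (sovA d L μ u k)) / stdPdf (sovZ d L μ u k.1)))
    _, mul_assoc, ← Finset.prod_mul_distrib]
  congr 1
  refine Finset.prod_congr rfl fun k _ => ?_
  rw [mul_comm, div_mul_cancel₀ _ (stdPdf_pos (sovZ d L μ u k.1)).ne']
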